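/- Let p be an irreducible stochastic routing matrix on nodes {0,1,...,d} with p(i,i)=0, arrival rates λ_j = p(0,j), service rates μ_j = Σ_k p(j,k), routing probabilities r(i,j) = p(i,j)/μ_j, and total arrival rates ν given by the unique solution of ν = λ + rᵀν. If the stability condition ρ_i = ν_i/μ_i < 1 holds for all i ∈ {1,...,d}, then the input/output ratio r = (Σ_{j=1}^d p(0,j)) / (Σ_{j=1}^d p(j,0)) satisfies r < 1. -/

import Mathlib

open Finset

/-- Stability of a Jackson network implies that the input/output ratio `r` is
less than one. -/
theorem jackson_input_output_ratio_lt_one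
    (d : ℕ) (p : Matrix (Fin (d + 1)) (Fin (d + 1)) ℝ)
    (hnn : ∀ i j, 0 ≤ p i j)
    (hsum : ∑ i, ∑ j, p i j = 1)
    (hdiag : ∀ i, p i i = 0)
    (hirr : ∀ i j, ∃ n : ℕ, 0 < (p ^ n) i j)
    (μ ν : Fin (d + 1) → ℝ)
    (hμ : ∀ j, μ j = ∑ k, p j k)
    (htraffic : ∀ j : Fin (d + 1), j ≠ 0 →
      ν j = p 0 j + ∑ k ∈ univ.filter (fun k : Fin (d + 1) => k ≠ 0), (p k j / μ k) * ν k)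
    (hstab : ∀ i : Fin (d + 1), i ≠ 0 → ν i / μ i < 1) :
    (∑ j ∈ univ.filter (fun j : Fin (d + 1) => j ≠ 0), p 0 j) /
      (∑ j ∈ univ.filter (fun j : Fin (d + 1) => j ≠ 0), p j 0) < 1 := by
  classical
  obtain _ | d := d
  · have he : (univ.filter (fun j : Fin (0 + 1) => j ≠ 0)) = ∅ := by
      ext j
      simp [Fin.fin_one_eq_zero j]
    rw [he]
    norm_num
  · set S := univ.filter (fun j : Fin (d + 1 + 1) => j ≠ 0) with hSdef
    -- service rates are positive at non-zero nodes
    have hμpos : ∀ k : Fin (d + 1 + 1), k ≠ 0 → 0 < μ k := by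
      intro k hk
      rcases lt_or_ge 0 (μ k) with h | h
      · exact h
      · exfalso
        have hsum0 : ∑ j, p k j = 0 :=
          le_antisymm (by rw [← hμ]; exact h) (Finset.sum_nonneg fun j _ => hnn k j)
        have hzero : ∀ j, p k j = 0 := fun j =>
          (Finset.sum_eq_zero_iff_of_nonneg (fun j _ => hnn k j)).1 hsum0 j (mem_univ j)
        have hpow : ∀ n, (p ^ n) k 0 = 0 := by
          intro n
          cases n with
          | zero => simp [Matrix.one_apply_ne hk]
          | succ n =>
            rw [pow_succ', Matrix.mul_apply]
            exact Finset.sum_eq_zero fun l _ => by rw [hzero l, zero_mul]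
        obtain ⟨n, hn⟩ := hirr k 0
        rw [hpow n] at hn
        exact lt_irrefl _ hn
    -- there is a non-zero node with positive routing to the outside
    have hone : (1 : Fin (d + 1 + 1)) ≠ 0 := by
      simp [Fin.ext_iff]
    obtain ⟨n, hn⟩ := hirr 1 0
    have hk0 : ∃ k : Fin (d + 1 + 1), k ≠ 0 ∧ 0 < p k 0 := by
      cases n with
      | zero => simp [Matrix.one_apply_ne hone] at hn
      | succ m =>
        rw [pow_succ, Matrix.mul_apply] at hn
        obtain ⟨l, -, hl⟩ := Finset.exists_ne_zero_of_sum_ne_zero (ne_of_gt hn)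
        have hpl : 0 < p l 0 := by
          rcases (hnn l 0).lt_or_eq with h | h
          · exact h
          · exact absurd (by rw [← h, mul_zero]) hl
        have hlne : l ≠ 0 := by
          intro h; rw [h, hdiag 0] at hpl; exact lt_irrefl _ hpl
        exact ⟨l, hlne, hpl⟩
    have hSsub : ∀ k, ∑ j ∈ S, p k j = μ k - p k 0 := by
      intro k
      rw [hSdef, Finset.filter_ne', Finset.sum_erase_eq_sub (mem_univ 0), hμ]
    -- key identity: total external input = ∑ ρ_k p k 0
    have key : ∑ j ∈ S, p 0 j = ∑ k ∈ S, ν k / μ k * p k 0 := by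
      have h1 : ∑ j ∈ S, ν j
          = ∑ j ∈ S, p 0 j + ∑ k ∈ S, (ν k - ν k / μ k * p k 0) := by
        have hc : ∀ j ∈ S, ν j = p 0 j + ∑ k ∈ S, p k j / μ k * ν k := by
          intro j hj
          exact htraffic j (by simpa [hSdef] using hj)
        rw [Finset.sum_congr rfl hc, Finset.sum_add_distrib]
        congr 1
        rw [Finset.sum_comm]
        apply Finset.sum_congr rfl
        intro k hk
        have hkne : k ≠ 0 := by simpa [hSdef] using hk
        have hμk : μ k ≠ 0 := ne_of_gt (hμpos k hkne)
        rw [← Finset.sum_mul, ← Finset.sum_div, hSsub k]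
        field_simp
      have h2 : ∑ k ∈ S, (ν k - ν k / μ k * p k 0)
          = ∑ k ∈ S, ν k - ∑ k ∈ S, ν k / μ k * p k 0 := Finset.sum_sub_distrib _ _
      rw [h2] at h1
      linarith
    obtain ⟨k0, hk0ne, hk0pos⟩ := hk0
    have hk0S : k0 ∈ S := by simp [hSdef, hk0ne]
    have hBpos : 0 < ∑ j ∈ S, p j 0 :=
      Finset.sum_pos' (fun j _ => hnn j 0) ⟨k0, hk0S, hk0pos⟩
    have hAB : ∑ j ∈ S, p 0 j < ∑ j ∈ S, p j 0 := by
      rw [key]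
      apply Finset.sum_lt_sum
      · intro k hk
        have hkne : k ≠ 0 := by simpa [hSdef] using hk
        have := hstab k hkne
        nlinarith [hnn k 0]
      · exact ⟨k0, hk0S, by nlinarith [hstab k0 hk0ne]⟩
    rw [div_lt_one hBpos]
    exact hAB
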